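/- Let A be a graded k-algebra whose underlying ungraded algebra is separable over k. Then the underlying ungraded algebra of the graded enveloping algebra A^e := A^op ⊗ᴳ A is semisimple. -/

import Mathlib

open scoped TensorProduct

/-- A separability idempotent for a `k`-algebra `R`: an element `p ∈ R ⊗ₖ R` with
`μ(p) = 1` and `x·p = p·x` (i.e. `(x ⊗ 1) p = p (1 ⊗ x)`) for all `x` in `R`. -/
def IsSepIdem (k R : Type*) [CommSemiring k] [Ring R] [Algebra k R]
    (p : R ⊗[k] R) : Prop :=
  LinearMap.mul' k R p = 1 ∧ ∀ x : R, ((x ⊗ₜ[k] (1 : R)) * p = p * ((1 : R) ⊗ₜ[k] x))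

theorem isSemisimpleRing_of_sepIdem {k R : Type*} [Field k] [Ring R] [Algebra k R]
    (p : R ⊗[k] R) (hp : IsSepIdem k R p) : IsSemisimpleRing R := by
  obtain ⟨hp1, hp2⟩ := hp
  refine (isSemisimpleModule_iff R R).mpr ⟨?_⟩
  intro N
  obtain ⟨N', hN'⟩ := Submodule.exists_isCompl (N.restrictScalars k)
  set πR : R →ₗ[k] R :=
    (N.restrictScalars k).subtype ∘ₗ Submodule.linearProjOfIsCompl _ _ hN' with hπR
  have hπmem : ∀ r : R, πR r ∈ N := fun r => ((Submodule.linearProjOfIsCompl _ _ hN') r).2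
  have hπfix : ∀ n ∈ N, πR n = n := by
    intro n hn
    simp only [hπR, LinearMap.comp_apply]
    exact congrArg Subtype.val (Submodule.linearProjOfIsCompl_apply_left hN' ⟨n, hn⟩)
  set B : R →ₗ[k] R →ₗ[k] (R →ₗ[k] R) :=
    LinearMap.mk₂ k (fun e f => LinearMap.mulLeft k e ∘ₗ πR ∘ₗ LinearMap.mulLeft k f)
      (by intro e e' f; ext r; simp [add_mul])
      (by intro c e f; ext r; simp [smul_mul_assoc])
      (by intro e f f'; ext r; simp [add_mul, mul_add])
      (by intro c e f; ext r; simp [smul_mul_assoc, mul_smul_comm]) with hB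
  set Φ : R ⊗[k] R →ₗ[k] (R →ₗ[k] R) := TensorProduct.lift B with hΦ
  have hmem : ∀ (q : R ⊗[k] R) (r : R), Φ q r ∈ N := by
    intro q r
    induction q using TensorProduct.induction_on with
    | zero => simp
    | tmul e f =>
      simp only [hΦ, TensorProduct.lift.tmul, hB, LinearMap.mk₂_apply, LinearMap.comp_apply,
        LinearMap.mulLeft_apply]
      have := N.smul_mem e (hπmem (f * r))
      simpa [smul_eq_mul] using this
    | add u v hu hv => simpa [map_add] using N.add_mem hu hv
  have hfix : ∀ (q : R ⊗[k] R) (n : R), n ∈ N → Φ q n = (LinearMap.mul' k R q) * n := by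
    intro q n hn
    induction q using TensorProduct.induction_on with
    | zero => simp
    | tmul e f =>
      have hfn : f * n ∈ N := by simpa [smul_eq_mul] using N.smul_mem f hn
      simp only [hΦ, TensorProduct.lift.tmul, hB, LinearMap.mk₂_apply, LinearMap.comp_apply,
        LinearMap.mulLeft_apply, LinearMap.mul'_apply]
      rw [hπfix _ hfn, mul_assoc]
    | add u v hu hv => simp [map_add, hu, hv, add_mul]
  have hlin : ∀ (q : R ⊗[k] R) (x r : R), Φ ((x ⊗ₜ[k] (1:R)) * q) r = x * Φ q r := by
    intro q x r
    induction q using TensorProduct.induction_on with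
    | zero => simp
    | tmul e f =>
      simp only [Algebra.TensorProduct.tmul_mul_tmul, one_mul, hΦ, TensorProduct.lift.tmul, hB,
        LinearMap.mk₂_apply, LinearMap.comp_apply, LinearMap.mulLeft_apply, mul_assoc]
    | add u v hu hv => simp [mul_add, map_add, hu, hv]
  have hshift : ∀ (q : R ⊗[k] R) (x r : R), Φ (q * ((1:R) ⊗ₜ[k] x)) r = Φ q (x * r) := by
    intro q x r
    induction q using TensorProduct.induction_on with
    | zero => simp
    | tmul e f =>
      simp only [Algebra.TensorProduct.tmul_mul_tmul, mul_one, hΦ, TensorProduct.lift.tmul, hB,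
        LinearMap.mk₂_apply, LinearMap.comp_apply, LinearMap.mulLeft_apply, mul_assoc]
    | add u v hu hv => simp [add_mul, map_add, hu, hv]
  have hRlin : ∀ (x r : R), Φ p (x * r) = x * Φ p r := by
    intro x r
    rw [← hshift p x r, ← hp2 x, hlin]
  set πt : R →ₗ[R] R :=
    { toFun := Φ p
      map_add' := (Φ p).map_add
      map_smul' := by intro x r; simpa [smul_eq_mul] using hRlin x r } with hπt
  refine ⟨LinearMap.ker πt, ?_, ?_⟩
  · rw [Submodule.disjoint_def]
    intro x hxN hxK
    have h1 : Φ p x = 0 := hxK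
    have h2 : Φ p x = x := by rw [hfix p x hxN, hp1, one_mul]
    rw [h2] at h1; exact h1
  · rw [codisjoint_iff_le_sup]
    intro r _
    have h1 : Φ p r ∈ N := hmem p r
    have h2 : r - Φ p r ∈ LinearMap.ker πt := by
      have : Φ p (Φ p r) = Φ p r := by rw [hfix p _ h1, hp1, one_mul]
      simp only [LinearMap.mem_ker, hπt, LinearMap.coe_mk, AddHom.coe_mk, map_sub]
      rw [this, sub_self]
    exact Submodule.mem_sup.mpr ⟨Φ p r, h1, r - Φ p r, h2, by abel⟩

section Graded
variable {k A : Type*} [Field k] [Ring A] [Algebra k A]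
variable (𝒜 : ℤ → Submodule k A) [GradedAlgebra 𝒜]

noncomputable def Pev : A →ₗ[k] A :=
  (DirectSum.toModule k ℤ A fun n => if Even n then (𝒜 n).subtype else 0) ∘ₗ
    (DirectSum.decomposeLinearEquiv 𝒜).toLinearMap

noncomputable def Pod : A →ₗ[k] A :=
  (DirectSum.toModule k ℤ A fun n => if Even n then 0 else (𝒜 n).subtype) ∘ₗ
    (DirectSum.decomposeLinearEquiv 𝒜).toLinearMap

variable {𝒜}

lemma Pev_of_mem {n : ℤ} {x : A} (hx : x ∈ 𝒜 n) :
    Pev 𝒜 x = if Even n then x else 0 := by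
  have : (DirectSum.decomposeLinearEquiv 𝒜) x = DirectSum.lof k ℤ (fun i => 𝒜 i) n ⟨x, hx⟩ := by
    simp [DirectSum.decomposeLinearEquiv, DirectSum.decompose_of_mem 𝒜 hx, DirectSum.lof_eq_of]
  rw [Pev, LinearMap.comp_apply]
  erw [this, DirectSum.toModule_lof]
  by_cases h : Even n <;> simp [h]

lemma Pod_of_mem {n : ℤ} {x : A} (hx : x ∈ 𝒜 n) :
    Pod 𝒜 x = if Even n then 0 else x := by
  have : (DirectSum.decomposeLinearEquiv 𝒜) x = DirectSum.lof k ℤ (fun i => 𝒜 i) n ⟨x, hx⟩ := by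
    simp [DirectSum.decomposeLinearEquiv, DirectSum.decompose_of_mem 𝒜 hx, DirectSum.lof_eq_of]
  rw [Pod, LinearMap.comp_apply]
  erw [this, DirectSum.toModule_lof]
  by_cases h : Even n <;> simp [h]

lemma Pev_one : Pev 𝒜 (1 : A) = 1 := by
  rw [Pev_of_mem (SetLike.one_mem_graded 𝒜)]; simp

variable (𝒜)

noncomputable def Pee : A ⊗[k] A →ₗ[k] A ⊗[k] A :=
  TensorProduct.map (Pev 𝒜) (Pev 𝒜) + TensorProduct.map (Pod 𝒜) (Pod 𝒜)

noncomputable def Pem : A ⊗[k] A →ₗ[k] A ⊗[k] A :=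
  TensorProduct.map (Pev 𝒜) (Pod 𝒜) + TensorProduct.map (Pod 𝒜) (Pev 𝒜)

noncomputable def epsT : A ⊗[k] A →ₗ[k] A ⊗[k] A := (Pev 𝒜 - Pod 𝒜).rTensor A

variable {𝒜}

lemma Pee_tmul {m n : ℤ} {a b : A} (ha : a ∈ 𝒜 m) (hb : b ∈ 𝒜 n) :
    Pee 𝒜 (a ⊗ₜ[k] b) = if (Even m ↔ Even n) then a ⊗ₜ[k] b else 0 := by
  simp only [Pee, LinearMap.add_apply, TensorProduct.map_tmul,
    Pev_of_mem ha, Pev_of_mem hb, Pod_of_mem ha, Pod_of_mem hb]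
  by_cases hm : Even m <;> by_cases hn : Even n <;> simp [hm, hn]

lemma Pem_tmul {m n : ℤ} {a b : A} (ha : a ∈ 𝒜 m) (hb : b ∈ 𝒜 n) :
    Pem 𝒜 (a ⊗ₜ[k] b) = if (Even m ↔ Even n) then 0 else a ⊗ₜ[k] b := by
  simp only [Pem, LinearMap.add_apply, TensorProduct.map_tmul,
    Pev_of_mem ha, Pev_of_mem hb, Pod_of_mem ha, Pod_of_mem hb]
  by_cases hm : Even m <;> by_cases hn : Even n <;> simp [hm, hn]

lemma neg_one_zpow_even {n : ℤ} (h : Even n) : ((-1 : k) ^ n) = 1 := by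
  obtain ⟨c, rfl⟩ := h
  rw [← two_mul, zpow_mul]
  norm_num

lemma neg_one_zpow_congr {s t : ℤ} (h : Even (s - t)) : ((-1 : k) ^ s) = (-1 : k) ^ t := by
  have hst : s = t + (s - t) := by ring
  rw [hst, zpow_add₀ (by norm_num : (-1:k) ≠ 0), neg_one_zpow_even h, mul_one]

lemma neg_one_zpow_mul (s t : ℤ) : (-1:k)^s * (-1:k)^t = (-1:k)^(s+t) :=
  (zpow_add₀ (by norm_num) s t).symm

lemma epsT_tmul {m : ℤ} {a b : A} (ha : a ∈ 𝒜 m) :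
    epsT 𝒜 (a ⊗ₜ[k] b) = ((-1:k)^m) • (a ⊗ₜ[k] b) := by
  rw [epsT, LinearMap.rTensor_tmul, LinearMap.sub_apply, Pev_of_mem ha, Pod_of_mem ha]
  by_cases hm : Even m
  · simp [hm, neg_one_zpow_even hm]
  · have : ((-1:k)^m) = -1 := by
      rw [neg_one_zpow_congr (t := 1) (by simpa [Int.even_sub] using hm)]; norm_num
    simp [hm, this, TensorProduct.sub_tmul, TensorProduct.smul_tmul', TensorProduct.neg_tmul]

lemma pee_induction (Q : A ⊗[k] A → Prop) (h0 : Q 0)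
    (hadd : ∀ u v, Q u → Q v → Q (u + v))
    (hhom : ∀ (m n : ℤ), Even (m + n) → ∀ a ∈ 𝒜 m, ∀ b ∈ 𝒜 n, Q (a ⊗ₜ[k] b)) :
    ∀ s, Q (Pee 𝒜 s) := by
  intro s
  induction s using TensorProduct.induction_on with
  | zero => simpa using h0
  | add u v hu hv => rw [map_add]; exact hadd _ _ hu hv
  | tmul a b =>
    induction a using DirectSum.Decomposition.inductionOn 𝒜 with
    | zero => simpa using h0
    | add a a' ha ha' => rw [TensorProduct.add_tmul, map_add]; exact hadd _ _ ha ha'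
    | homogeneous a =>
      induction b using DirectSum.Decomposition.inductionOn 𝒜 with
      | zero => simpa using h0
      | add b b' hb hb' => rw [TensorProduct.tmul_add, map_add]; exact hadd _ _ hb hb'
      | homogeneous b =>
        rename_i m n
        rw [Pee_tmul a.2 b.2]
        by_cases h : Even m ↔ Even n
        · rw [if_pos h]; exact hhom m n (Int.even_add.mpr h) a a.2 b b.2
        · rw [if_neg h]; exact h0

end Graded

section Graded2
variable {k A : Type*} [Field k] [Ring A] [Algebra k A]
variable {𝒜 : ℤ → Submodule k A} [GradedAlgebra 𝒜]

lemma Pee_mulL {m : ℤ} {x : A} (hx : x ∈ 𝒜 m) (hm : Even m) (t : A ⊗[k] A) :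
    Pee 𝒜 ((x ⊗ₜ[k] (1:A)) * t) = (x ⊗ₜ[k] (1:A)) * Pee 𝒜 t := by
  induction t using TensorProduct.induction_on with
  | zero => simp
  | add u v hu hv => rw [mul_add, map_add, hu, hv, map_add, mul_add]
  | tmul a b =>
    induction a using DirectSum.Decomposition.inductionOn 𝒜 with
    | zero => simp
    | add a a' ha ha' =>
      rw [TensorProduct.add_tmul, mul_add, map_add, ha, ha', map_add, mul_add]
    | homogeneous a =>
      induction b using DirectSum.Decomposition.inductionOn 𝒜 with
      | zero => simp
      | add b b' hb hb' =>
        rw [TensorProduct.tmul_add, mul_add, map_add, hb, hb', map_add, mul_add]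
      | homogeneous b =>
        rename_i α β
        rw [Algebra.TensorProduct.tmul_mul_tmul, one_mul,
          Pee_tmul (SetLike.mul_mem_graded hx a.2) b.2, Pee_tmul a.2 b.2]
        have hmα : Even (m + α) ↔ Even α := by rw [Int.even_add]; tauto
        by_cases h : Even α ↔ Even β
        · rw [if_pos (by rw [hmα]; exact h), if_pos h,
            Algebra.TensorProduct.tmul_mul_tmul, one_mul]
        · rw [if_neg (by rw [hmα]; exact h), if_neg h, mul_zero]

lemma Pem_mulL {m : ℤ} {x : A} (hx : x ∈ 𝒜 m) (hm : ¬ Even m) (t : A ⊗[k] A) :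
    Pem 𝒜 ((x ⊗ₜ[k] (1:A)) * t) = (x ⊗ₜ[k] (1:A)) * Pee 𝒜 t := by
  induction t using TensorProduct.induction_on with
  | zero => simp
  | add u v hu hv => rw [mul_add, map_add, hu, hv, map_add, mul_add]
  | tmul a b =>
    induction a using DirectSum.Decomposition.inductionOn 𝒜 with
    | zero => simp
    | add a a' ha ha' =>
      rw [TensorProduct.add_tmul, mul_add, map_add, ha, ha', map_add, mul_add]
    | homogeneous a =>
      induction b using DirectSum.Decomposition.inductionOn 𝒜 with
      | zero => simp
      | add b b' hb hb' =>
        rw [TensorProduct.tmul_add, mul_add, map_add, hb, hb', map_add, mul_add]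
      | homogeneous b =>
        rename_i α β
        rw [Algebra.TensorProduct.tmul_mul_tmul, one_mul,
          Pem_tmul (SetLike.mul_mem_graded hx a.2) b.2, Pee_tmul a.2 b.2]
        have hmα : Even (m + α) ↔ ¬ Even α := by rw [Int.even_add]; tauto
        by_cases h : Even α ↔ Even β
        · rw [if_neg (by rw [hmα]; tauto), if_pos h,
            Algebra.TensorProduct.tmul_mul_tmul, one_mul]
        · rw [if_pos (by rw [hmα]; tauto), if_neg h, mul_zero]

lemma Pee_mulR {m : ℤ} {x : A} (hx : x ∈ 𝒜 m) (hm : Even m) (t : A ⊗[k] A) :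
    Pee 𝒜 (t * ((1:A) ⊗ₜ[k] x)) = Pee 𝒜 t * ((1:A) ⊗ₜ[k] x) := by
  induction t using TensorProduct.induction_on with
  | zero => simp
  | add u v hu hv => rw [add_mul, map_add, hu, hv, map_add, add_mul]
  | tmul a b =>
    induction a using DirectSum.Decomposition.inductionOn 𝒜 with
    | zero => simp
    | add a a' ha ha' =>
      rw [TensorProduct.add_tmul, add_mul, map_add, ha, ha', map_add, add_mul]
    | homogeneous a =>
      induction b using DirectSum.Decomposition.inductionOn 𝒜 with
      | zero => simp
      | add b b' hb hb' =>
        rw [TensorProduct.tmul_add, add_mul, map_add, hb, hb', map_add, add_mul]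
      | homogeneous b =>
        rename_i α β
        rw [Algebra.TensorProduct.tmul_mul_tmul, mul_one,
          Pee_tmul a.2 (SetLike.mul_mem_graded b.2 hx), Pee_tmul a.2 b.2]
        have hmβ : Even (β + m) ↔ Even β := by rw [Int.even_add]; tauto
        by_cases h : Even α ↔ Even β
        · rw [if_pos (by rw [hmβ]; tauto), if_pos h,
            Algebra.TensorProduct.tmul_mul_tmul, mul_one]
        · rw [if_neg (by rw [hmβ]; tauto), if_neg h, zero_mul]

lemma Pem_mulR {m : ℤ} {x : A} (hx : x ∈ 𝒜 m) (hm : ¬ Even m) (t : A ⊗[k] A) :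
    Pem 𝒜 (t * ((1:A) ⊗ₜ[k] x)) = Pee 𝒜 t * ((1:A) ⊗ₜ[k] x) := by
  induction t using TensorProduct.induction_on with
  | zero => simp
  | add u v hu hv => rw [add_mul, map_add, hu, hv, map_add, add_mul]
  | tmul a b =>
    induction a using DirectSum.Decomposition.inductionOn 𝒜 with
    | zero => simp
    | add a a' ha ha' =>
      rw [TensorProduct.add_tmul, add_mul, map_add, ha, ha', map_add, add_mul]
    | homogeneous a =>
      induction b using DirectSum.Decomposition.inductionOn 𝒜 with
      | zero => simp
      | add b b' hb hb' =>
        rw [TensorProduct.tmul_add, add_mul, map_add, hb, hb', map_add, add_mul]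
      | homogeneous b =>
        rename_i α β
        rw [Algebra.TensorProduct.tmul_mul_tmul, mul_one,
          Pem_tmul a.2 (SetLike.mul_mem_graded b.2 hx), Pee_tmul a.2 b.2]
        have hmβ : Even (β + m) ↔ ¬ Even β := by rw [Int.even_add]; tauto
        by_cases h : Even α ↔ Even β
        · rw [if_neg (by rw [hmβ]; tauto), if_pos h,
            Algebra.TensorProduct.tmul_mul_tmul, mul_one]
        · rw [if_pos (by rw [hmβ]; tauto), if_neg h, zero_mul]

lemma mul'_Pee (t : A ⊗[k] A) :
    LinearMap.mul' k A (Pee 𝒜 t) = Pev 𝒜 (LinearMap.mul' k A t) := by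
  induction t using TensorProduct.induction_on with
  | zero => simp
  | add u v hu hv => rw [map_add, map_add, hu, hv, map_add, map_add]
  | tmul a b =>
    induction a using DirectSum.Decomposition.inductionOn 𝒜 with
    | zero => simp
    | add a a' ha ha' =>
      rw [TensorProduct.add_tmul, map_add, map_add, ha, ha', map_add, map_add]
    | homogeneous a =>
      induction b using DirectSum.Decomposition.inductionOn 𝒜 with
      | zero => simp
      | add b b' hb hb' =>
        rw [TensorProduct.tmul_add, map_add, map_add, hb, hb', map_add, map_add]
      | homogeneous b =>
        rename_i α β
        rw [Pee_tmul a.2 b.2, LinearMap.mul'_apply,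
          Pev_of_mem (SetLike.mul_mem_graded a.2 b.2)]
        by_cases h : Even α ↔ Even β
        · rw [if_pos h, if_pos (Int.even_add.mpr h), LinearMap.mul'_apply]
        · rw [if_neg h, if_neg (by rw [Int.even_add]; tauto), map_zero]

end Graded2

section Graded3
variable {k A E : Type*} [Field k] [Ring A] [Algebra k A] [Ring E] [Algebra k E]
variable (𝒜 : ℤ → Submodule k A) [GradedAlgebra 𝒜]
variable (φ : A ⊗[k] A ≃ₗ[k] E)

noncomputable def F2 : (A ⊗[k] A) ⊗[k] (A ⊗[k] A) →ₗ[k] E ⊗[k] E :=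
  TensorProduct.map φ.toLinearMap φ.toLinearMap ∘ₗ
    (TensorProduct.tensorTensorTensorComm k A A A A).toLinearMap ∘ₗ
    (TensorProduct.map (TensorProduct.comm k A A).toLinearMap LinearMap.id)

lemma F2_tmul (a b a' b' : A) :
    F2 φ ((a ⊗ₜ[k] b) ⊗ₜ[k] (a' ⊗ₜ[k] b')) = φ (b ⊗ₜ[k] a') ⊗ₜ[k] φ (a ⊗ₜ[k] b') := by
  simp [F2]

noncomputable def Lam (c : k) (u v : A ⊗[k] A) : E ⊗[k] E :=
  F2 φ (((Pev 𝒜).rTensor A u) ⊗ₜ[k] v) + c • F2 φ (((Pod 𝒜).rTensor A u) ⊗ₜ[k] (epsT 𝒜 v))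

lemma Lam_zero_left (c : k) (v : A ⊗[k] A) : Lam 𝒜 φ c 0 v = 0 := by simp [Lam]

lemma Lam_zero_right (c : k) (u : A ⊗[k] A) : Lam 𝒜 φ c u 0 = 0 := by simp [Lam]

lemma Lam_add_left (c : k) (u u' v : A ⊗[k] A) :
    Lam 𝒜 φ c (u + u') v = Lam 𝒜 φ c u v + Lam 𝒜 φ c u' v := by
  simp only [Lam, map_add, TensorProduct.add_tmul, smul_add]
  abel

lemma Lam_add_right (c : k) (u v v' : A ⊗[k] A) :
    Lam 𝒜 φ c u (v + v') = Lam 𝒜 φ c u v + Lam 𝒜 φ c u v' := by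
  simp only [Lam, map_add, TensorProduct.tmul_add, smul_add]
  abel

variable {𝒜}
variable (hmul : ∀ (m n m' n' : ℤ), ∀ x ∈ 𝒜 m, ∀ y ∈ 𝒜 n, ∀ x' ∈ 𝒜 m', ∀ y' ∈ 𝒜 n',
      φ (x ⊗ₜ[k] y) * φ (x' ⊗ₜ[k] y')
        = ((-1 : k) ^ (n * m' + m * m')) • φ ((x' * x) ⊗ₜ[k] (y * y')))

include hmul in
lemma S0lem : ∀ s t : A ⊗[k] A,
    LinearMap.mul' k E (Lam 𝒜 φ ((-1:k)^(1:ℤ)) (Pee 𝒜 s) (Pee 𝒜 t))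
      = φ ((LinearMap.mul' k A (Pee 𝒜 s)) ⊗ₜ[k] (LinearMap.mul' k A (Pee 𝒜 t))) := by
  intro s
  refine pee_induction (𝒜 := 𝒜) (fun u => ∀ t, LinearMap.mul' k E (Lam 𝒜 φ ((-1:k)^(1:ℤ)) u (Pee 𝒜 t))
      = φ ((LinearMap.mul' k A u) ⊗ₜ[k] (LinearMap.mul' k A (Pee 𝒜 t)))) ?_ ?_ ?_ s
  · intro t; simp [Lam_zero_left]
  · intro u v hu hv t
    rw [Lam_add_left, map_add, hu, hv, map_add, TensorProduct.add_tmul, map_add]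
  · intro α β hαβ a ha b hb t
    refine pee_induction (𝒜 := 𝒜) (fun v => LinearMap.mul' k E (Lam 𝒜 φ ((-1:k)^(1:ℤ)) (a ⊗ₜ[k] b) v)
        = φ ((LinearMap.mul' k A (a ⊗ₜ[k] b)) ⊗ₜ[k] (LinearMap.mul' k A v))) ?_ ?_ ?_ t
    · simp [Lam_zero_right]
    · intro u v hu hv
      rw [Lam_add_right, map_add, hu, hv, map_add, TensorProduct.tmul_add, map_add]
    · intro α' β' hα'β' a' ha' b' hb'
      rw [Lam, LinearMap.rTensor_tmul, LinearMap.rTensor_tmul,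
        Pev_of_mem ha, Pod_of_mem ha, epsT_tmul ha']
      by_cases hα : Even α
      · rw [if_pos hα, if_pos hα]
        simp only [TensorProduct.zero_tmul, map_zero, smul_zero, add_zero]
        rw [F2_tmul, LinearMap.mul'_apply, hmul β α' α β' b hb a' ha' a ha b' hb',
          LinearMap.mul'_apply, LinearMap.mul'_apply,
          neg_one_zpow_even (by
            simp only [Int.even_add, Int.even_mul] at *
            tauto), one_smul]
      · rw [if_neg hα, if_neg hα]
        simp only [TensorProduct.zero_tmul, map_zero, zero_add, TensorProduct.tmul_smul,
          map_smul, smul_smul, LinearMap.smul_apply]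
        rw [F2_tmul, LinearMap.mul'_apply, hmul β α' α β' b hb a' ha' a ha b' hb',
          LinearMap.mul'_apply, LinearMap.mul'_apply, smul_smul,
          neg_one_zpow_mul, neg_one_zpow_mul,
          neg_one_zpow_even (by
            simp only [Int.even_add, Int.even_mul] at *
            tauto), one_smul]

lemma not_even_one_int : ¬ Even (1:ℤ) := by decide

lemma zpow_smul_congr {M : Type*} [AddCommMonoid M] [Module k M] {s t : ℤ}
    (h : Even (s - t)) (x : M) : ((-1:k)^s) • x = ((-1:k)^t) • x := by
  rw [neg_one_zpow_congr h]


include hmul in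
set_option maxHeartbeats 1600000 in
lemma S1lem {m n : ℤ} {x y : A} (hx : x ∈ 𝒜 m) (hy : y ∈ 𝒜 n) : ∀ s t : A ⊗[k] A,
    (φ (x ⊗ₜ[k] y) ⊗ₜ[k] (1:E)) * Lam 𝒜 φ ((-1:k)^(1:ℤ)) (Pee 𝒜 s) (Pee 𝒜 t)
      = Lam 𝒜 φ ((-1:k)^(m+1)) ((Pee 𝒜 s) * ((1:A) ⊗ₜ[k] x)) ((y ⊗ₜ[k] (1:A)) * (Pee 𝒜 t)) := by
  intro s
  refine pee_induction (𝒜 := 𝒜) (fun u => ∀ t,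
      (φ (x ⊗ₜ[k] y) ⊗ₜ[k] (1:E)) * Lam 𝒜 φ ((-1:k)^(1:ℤ)) u (Pee 𝒜 t)
        = Lam 𝒜 φ ((-1:k)^(m+1)) (u * ((1:A) ⊗ₜ[k] x)) ((y ⊗ₜ[k] (1:A)) * (Pee 𝒜 t))) ?_ ?_ ?_ s
  · intro t; simp [Lam_zero_left]
  · intro u v hu hv t
    rw [Lam_add_left, mul_add, hu, hv, add_mul, Lam_add_left]
  · intro α β hαβ a ha b hb t
    refine pee_induction (𝒜 := 𝒜) (fun v =>
        (φ (x ⊗ₜ[k] y) ⊗ₜ[k] (1:E)) * Lam 𝒜 φ ((-1:k)^(1:ℤ)) (a ⊗ₜ[k] b) v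
          = Lam 𝒜 φ ((-1:k)^(m+1)) ((a ⊗ₜ[k] b) * ((1:A) ⊗ₜ[k] x)) ((y ⊗ₜ[k] (1:A)) * v)) ?_ ?_ ?_ t
    · simp [Lam_zero_right]
    · intro u v hu hv
      rw [Lam_add_right, mul_add, hu, hv, mul_add, Lam_add_right]
    · intro α' β' hα'β' a' ha' b' hb'
      rw [Algebra.TensorProduct.tmul_mul_tmul, mul_one, Algebra.TensorProduct.tmul_mul_tmul,
        one_mul]
      rw [Lam, Lam, LinearMap.rTensor_tmul, LinearMap.rTensor_tmul,
        LinearMap.rTensor_tmul, LinearMap.rTensor_tmul,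
        Pev_of_mem ha, Pod_of_mem ha,
        epsT_tmul ha', epsT_tmul (SetLike.mul_mem_graded hy ha')]
      by_cases hα : Even α
      · simp only [if_pos hα, TensorProduct.zero_tmul, map_zero, smul_zero, add_zero]
        rw [F2_tmul, F2_tmul, Algebra.TensorProduct.tmul_mul_tmul, one_mul,
          hmul m n β α' x hx y hy b hb a' ha', ← TensorProduct.smul_tmul',
          neg_one_zpow_even (by
            simp only [Int.even_add, Int.even_mul, not_even_one_int] at hαβ hα'β' ⊢
            tauto), one_smul]
      · simp only [if_neg hα, TensorProduct.zero_tmul, map_zero, zero_add,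
          TensorProduct.tmul_smul, map_smul, mul_smul_comm, smul_smul, F2_tmul]
        rw [Algebra.TensorProduct.tmul_mul_tmul, one_mul,
          hmul m n β α' x hx y hy b hb a' ha', ← TensorProduct.smul_tmul']
        simp only [smul_smul, neg_one_zpow_mul]
        exact zpow_smul_congr (by
          simp only [Int.even_sub, Int.even_add, Int.even_mul, not_even_one_int]
            at hαβ hα'β' ⊢
          tauto) _

include hmul in
set_option maxHeartbeats 1600000 in
lemma S3lem {m n : ℤ} {x y : A} (hx : x ∈ 𝒜 m) (hy : y ∈ 𝒜 n) : ∀ s t : A ⊗[k] A,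
    Lam 𝒜 φ ((-1:k)^(1:ℤ)) (Pee 𝒜 s) (Pee 𝒜 t) * ((1:E) ⊗ₜ[k] φ (x ⊗ₜ[k] y))
      = Lam 𝒜 φ ((-1:k)^(m+1)) ((x ⊗ₜ[k] (1:A)) * (Pee 𝒜 s)) ((Pee 𝒜 t) * ((1:A) ⊗ₜ[k] y)) := by
  intro s
  refine pee_induction (𝒜 := 𝒜) (fun u => ∀ t,
      Lam 𝒜 φ ((-1:k)^(1:ℤ)) u (Pee 𝒜 t) * ((1:E) ⊗ₜ[k] φ (x ⊗ₜ[k] y))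
        = Lam 𝒜 φ ((-1:k)^(m+1)) ((x ⊗ₜ[k] (1:A)) * u) ((Pee 𝒜 t) * ((1:A) ⊗ₜ[k] y))) ?_ ?_ ?_ s
  · intro t; simp [Lam_zero_left]
  · intro u v hu hv t
    rw [Lam_add_left, add_mul, hu, hv, mul_add, Lam_add_left]
  · intro α β hαβ a ha b hb t
    refine pee_induction (𝒜 := 𝒜) (fun v =>
        Lam 𝒜 φ ((-1:k)^(1:ℤ)) (a ⊗ₜ[k] b) v * ((1:E) ⊗ₜ[k] φ (x ⊗ₜ[k] y))
          = Lam 𝒜 φ ((-1:k)^(m+1)) ((x ⊗ₜ[k] (1:A)) * (a ⊗ₜ[k] b)) (v * ((1:A) ⊗ₜ[k] y))) ?_ ?_ ?_ t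
    · simp [Lam_zero_right]
    · intro u v hu hv
      rw [Lam_add_right, add_mul, hu, hv, add_mul, Lam_add_right]
    · intro α' β' hα'β' a' ha' b' hb'
      rw [Algebra.TensorProduct.tmul_mul_tmul, one_mul, Algebra.TensorProduct.tmul_mul_tmul,
        mul_one]
      rw [Lam, Lam, LinearMap.rTensor_tmul, LinearMap.rTensor_tmul,
        LinearMap.rTensor_tmul, LinearMap.rTensor_tmul,
        Pev_of_mem ha, Pod_of_mem ha,
        Pev_of_mem (SetLike.mul_mem_graded hx ha), Pod_of_mem (SetLike.mul_mem_graded hx ha),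
        epsT_tmul ha', epsT_tmul ha']
      by_cases hα : Even α <;> by_cases hm : Even m
      · have h2 : Even (m + α) := by rw [Int.even_add]; tauto
        simp only [if_pos hα, if_pos h2, TensorProduct.zero_tmul, map_zero, smul_zero, add_zero]
        rw [F2_tmul, F2_tmul, Algebra.TensorProduct.tmul_mul_tmul, mul_one,
          hmul α β' m n a ha b' hb' x hx y hy, TensorProduct.tmul_smul,
          neg_one_zpow_even (by
            simp only [Int.even_add, Int.even_mul, not_even_one_int] at hαβ hα'β' ⊢
            tauto), one_smul]
      · have h2 : ¬ Even (m + α) := by rw [Int.even_add]; tauto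
        simp only [if_pos hα, if_neg h2, TensorProduct.zero_tmul, map_zero, smul_zero,
          add_zero, zero_add, TensorProduct.tmul_smul, map_smul, smul_smul, F2_tmul]
        rw [Algebra.TensorProduct.tmul_mul_tmul, mul_one,
          hmul α β' m n a ha b' hb' x hx y hy, TensorProduct.tmul_smul]
        simp only [smul_smul, neg_one_zpow_mul]
        exact zpow_smul_congr (by
          simp only [Int.even_sub, Int.even_add, Int.even_mul, not_even_one_int]
            at hαβ hα'β' ⊢
          tauto) _
      · have h2 : ¬ Even (m + α) := by rw [Int.even_add]; tauto
        simp only [if_neg hα, if_neg h2, TensorProduct.zero_tmul, map_zero, zero_add,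
          TensorProduct.tmul_smul, map_smul, smul_smul, smul_mul_assoc, F2_tmul]
        rw [Algebra.TensorProduct.tmul_mul_tmul, mul_one,
          hmul α β' m n a ha b' hb' x hx y hy, TensorProduct.tmul_smul]
        simp only [smul_smul, neg_one_zpow_mul]
        exact zpow_smul_congr (by
          simp only [Int.even_sub, Int.even_add, Int.even_mul, not_even_one_int]
            at hαβ hα'β' ⊢
          tauto) _
      · have h2 : Even (m + α) := by rw [Int.even_add]; tauto
        simp only [if_neg hα, if_pos h2, TensorProduct.zero_tmul, map_zero, zero_add,
          smul_zero, add_zero, TensorProduct.tmul_smul, map_smul, smul_smul,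
          smul_mul_assoc, F2_tmul]
        rw [Algebra.TensorProduct.tmul_mul_tmul, mul_one,
          hmul α β' m n a ha b' hb' x hx y hy, TensorProduct.tmul_smul]
        simp only [smul_smul, neg_one_zpow_mul]
        rw [neg_one_zpow_even (n := 1 + α' + (β' * m + α * m)) (by
            simp only [Int.even_add, Int.even_mul, not_even_one_int] at hαβ hα'β' ⊢
            tauto), one_smul]

end Graded3


theorem graded_enveloping_algebra_semisimple
    {k A E : Type*} [Field k] [Ring A] [Algebra k A] [Ring E] [Algebra k E]
    (𝒜 : ℤ → Submodule k A) [GradedAlgebra 𝒜]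
    -- `E` realises the graded enveloping algebra `Aᵒᵖ ⊗ᴳ A`
    (φ : A ⊗[k] A ≃ₗ[k] E)
    (hone : φ ((1 : A) ⊗ₜ[k] (1 : A)) = 1)
    (hmul : ∀ (m n m' n' : ℤ), ∀ x ∈ 𝒜 m, ∀ y ∈ 𝒜 n, ∀ x' ∈ 𝒜 m', ∀ y' ∈ 𝒜 n',
      φ (x ⊗ₜ[k] y) * φ (x' ⊗ₜ[k] y')
        = ((-1 : k) ^ (n * m' + m * m')) • φ ((x' * x) ⊗ₜ[k] (y * y')))
    -- the underlying ungraded algebra of `A` is separable over `k`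
    (hsep : ∃ p : A ⊗[k] A, IsSepIdem k A p) :
    -- the underlying ungraded algebra of `Aᵉ` is semisimple
    IsSemisimpleRing E := by
  obtain ⟨p, hp1, hp2⟩ := hsep
  -- the even-degree part of `p` is again a separability idempotent
  have hPcomm : ∀ z : A,
      (z ⊗ₜ[k] (1:A)) * Pee 𝒜 p = Pee 𝒜 p * ((1:A) ⊗ₜ[k] z) := by
    intro z
    induction z using DirectSum.Decomposition.inductionOn 𝒜 with
    | zero => simp
    | add z z' h h' =>
      rw [TensorProduct.add_tmul, add_mul, h, h', TensorProduct.tmul_add, mul_add]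
    | homogeneous z =>
      rename_i mz
      by_cases hmz : Even mz
      · rw [← Pee_mulL z.2 hmz (𝒜 := 𝒜) p, hp2, Pee_mulR z.2 hmz]
      · rw [← Pem_mulL z.2 hmz (𝒜 := 𝒜) p, hp2, Pem_mulR z.2 hmz]
  have hP1 : LinearMap.mul' k A (Pee 𝒜 p) = 1 := by
    rw [mul'_Pee, hp1, Pev_of_mem (SetLike.one_mem_graded 𝒜)]
    simp
  -- the separability idempotent of `E`
  have hq1 : LinearMap.mul' k E
      (Lam 𝒜 φ ((-1:k)^(1:ℤ)) (Pee 𝒜 p) (Pee 𝒜 p)) = 1 := by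
    rw [S0lem φ hmul p p, hP1, hone]
  have hq2 : ∀ e : E,
      (e ⊗ₜ[k] (1:E)) * Lam 𝒜 φ ((-1:k)^(1:ℤ)) (Pee 𝒜 p) (Pee 𝒜 p)
        = Lam 𝒜 φ ((-1:k)^(1:ℤ)) (Pee 𝒜 p) (Pee 𝒜 p) * ((1:E) ⊗ₜ[k] e) := by
    have key : ∀ t : A ⊗[k] A,
        (φ t ⊗ₜ[k] (1:E)) * Lam 𝒜 φ ((-1:k)^(1:ℤ)) (Pee 𝒜 p) (Pee 𝒜 p)
          = Lam 𝒜 φ ((-1:k)^(1:ℤ)) (Pee 𝒜 p) (Pee 𝒜 p) * ((1:E) ⊗ₜ[k] φ t) := by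
      intro t
      induction t using TensorProduct.induction_on with
      | zero => simp
      | add u v hu hv =>
        rw [map_add, TensorProduct.add_tmul, add_mul, hu, hv, TensorProduct.tmul_add, mul_add]
      | tmul xx yy =>
        induction xx using DirectSum.Decomposition.inductionOn 𝒜 with
        | zero => simp
        | add z z' h h' =>
          rw [TensorProduct.add_tmul, map_add, TensorProduct.add_tmul, add_mul, h, h',
            TensorProduct.tmul_add, mul_add]
        | homogeneous z =>
          induction yy using DirectSum.Decomposition.inductionOn 𝒜 with
          | zero => simp
          | add w w' h h' =>
            rw [TensorProduct.tmul_add, map_add, TensorProduct.add_tmul, add_mul, h, h',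
              TensorProduct.tmul_add, mul_add]
          | homogeneous w =>
            rw [S1lem φ hmul z.2 w.2 p p, S3lem φ hmul z.2 w.2 p p, hPcomm (z : A), ← hPcomm (w : A)]
    intro e
    have h := key (φ.symm e)
    rwa [LinearEquiv.apply_symm_apply] at h
  exact isSemisimpleRing_of_sepIdem _ ⟨hq1, hq2⟩
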